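/- arXiv:2512.06703 — 3 statements merged into one kernel-verified Lean document; each statement's English description precedes it below -/
import Mathlib

section
/- Let g : (0,∞) → (0,∞) be C¹ with 1 ≤ δ ≤ t·g'(t)/g(t) ≤ g₀ for all t > 0, and define the vector field 𝒜(z) = g(|z|)·z/|z| on ℝⁿ \ {0}. Then there exists a constant C = C(n, g₀) > 0 such that for all nonzero z₁, z₂ ∈ ℝⁿ with the segment [z₁,z₂] avoiding 0, |𝒜(z₁) − 𝒜(z₂)| ≤ C · (g(|z₁|+|z₂|)/(|z₁|+|z₂|)) · |z₁ − z₂|. -/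
open Set

/-- Lemma 2.6 (growthg): for `g` satisfying the Lieberman condition with `δ ≥ 1`
and `𝒜(z) = g(‖z‖) z/‖z‖`, there is `C = C(n,g₀) > 0` such that for all nonzero
`z₁, z₂` whose segment avoids the origin,
`‖𝒜 z₁ − 𝒜 z₂‖ ≤ C (g(‖z₁‖+‖z₂‖)/(‖z₁‖+‖z₂‖)) ‖z₁ − z₂‖`. -/
theorem stmt7 (n : ℕ) (g g' : ℝ → ℝ) (δ g₀ : ℝ) (hδ : 1 ≤ δ) (hδg₀ : δ ≤ g₀)
    (hgpos : ∀ t, 0 < t → 0 < g t)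
    (hgderiv : ∀ t, 0 < t → HasDerivAt g (g' t) t)
    (hcont : ContinuousOn g' (Set.Ioi 0))
    (hlieb : ∀ t, 0 < t → δ ≤ t * g' t / g t ∧ t * g' t / g t ≤ g₀)
    (A : EuclideanSpace ℝ (Fin n) → EuclideanSpace ℝ (Fin n))
    (hA : ∀ z, z ≠ 0 → A z = (g ‖z‖ / ‖z‖) • z) :
    ∃ C > (0:ℝ), ∀ z₁ z₂ : EuclideanSpace ℝ (Fin n), z₁ ≠ 0 → z₂ ≠ 0 →
      (0:EuclideanSpace ℝ (Fin n)) ∉ segment ℝ z₁ z₂ →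
      ‖A z₁ - A z₂‖ ≤ C * (g (‖z₁‖ + ‖z₂‖) / (‖z₁‖ + ‖z₂‖)) * ‖z₁ - z₂‖ := by
  have hg₀1 : (1:ℝ) ≤ g₀ := le_trans hδ hδg₀
  refine ⟨g₀, by linarith, ?_⟩
  set φ : ℝ → ℝ := fun t => g t / t with hφdef
  -- basic scalar facts
  have hlow : ∀ t, 0 < t → g t ≤ t * g' t := by
    intro t ht
    have h := (hlieb t ht).1
    have hg := hgpos t ht
    have h' : δ * g t ≤ t * g' t := by
      rw [le_div_iff₀ hg] at h; linarith
    nlinarith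
  have hup : ∀ t, 0 < t → t * g' t ≤ g₀ * g t := by
    intro t ht
    have h := (hlieb t ht).2
    have hg := hgpos t ht
    rwa [div_le_iff₀ hg] at h
  have hφderiv : ∀ t, 0 < t →
      HasDerivAt φ ((g' t * t - g t * 1) / t ^ 2) t := by
    intro t ht
    exact (hgderiv t ht).div (hasDerivAt_id t) ht.ne'
  -- monotonicity of φ on (0,∞)
  have hmono : MonotoneOn φ (Ioi (0:ℝ)) := by
    apply monotoneOn_of_deriv_nonneg (convex_Ioi 0)
    · intro t ht
      exact ((hφderiv t ht).continuousAt).continuousWithinAt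
    · intro t ht
      rw [interior_Ioi] at ht
      exact ((hφderiv t ht).differentiableAt).differentiableWithinAt
    · intro t ht
      rw [interior_Ioi] at ht
      rw [(hφderiv t ht).deriv]
      have h1 := hlow t ht
      have h2 : (0:ℝ) < t ^ 2 := pow_pos ht 2
      apply div_nonneg _ (le_of_lt h2)
      nlinarith
  -- key scalar estimate
  have key : ∀ a b : ℝ, 0 < a → a ≤ b →
      (φ b - φ a) * a ≤ (g₀ - 1) * φ (a + b) * (b - a) := by
    intro a b ha hab
    rcases eq_or_lt_of_le hab with rfl | hab'
    · simp
    · have hb : (0:ℝ) < b := lt_trans ha hab'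
      obtain ⟨ξ, hξ, hslope⟩ := exists_hasDerivAt_eq_slope φ
        (fun t => (g' t * t - g t * 1) / t ^ 2) hab'
        (fun t ht => ((hφderiv t (lt_of_lt_of_le ha ht.1)).continuousAt).continuousWithinAt)
        (fun t ht => hφderiv t (lt_trans ha ht.1))
      have hξ0 : (0:ℝ) < ξ := lt_trans ha hξ.1
      have hgξ := hgpos ξ hξ0
      have hφeq : φ b - φ a = ((g' ξ * ξ - g ξ * 1) / ξ ^ 2) * (b - a) := by
        rw [hslope, div_mul_cancel₀ _ (sub_ne_zero.2 hab'.ne')]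
      have hbound : ((g' ξ * ξ - g ξ * 1) / ξ ^ 2) * a ≤ (g₀ - 1) * φ ξ := by
        have h2 : (0:ℝ) < ξ ^ 2 := by positivity
        have hup' := hup ξ hξ0
        have haξ : a ≤ ξ := le_of_lt hξ.1
        have h3 : (g' ξ * ξ - g ξ * 1) / ξ ^ 2 * a ≤ (g' ξ * ξ - g ξ * 1) / ξ ^ 2 * ξ := by
          apply mul_le_mul_of_nonneg_left haξ
          apply div_nonneg _ (le_of_lt h2)
          have := hlow ξ hξ0; nlinarith
        calc (g' ξ * ξ - g ξ * 1) / ξ ^ 2 * a ≤ (g' ξ * ξ - g ξ * 1) / ξ ^ 2 * ξ := h3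
          _ = (g' ξ * ξ - g ξ) / ξ := by field_simp
          _ ≤ (g₀ - 1) * (g ξ / ξ) := by
              rw [div_le_iff₀ hξ0]
              have : (g₀ - 1) * (g ξ / ξ) * ξ = g₀ * g ξ - g ξ := by field_simp
              rw [this]; nlinarith
          _ = (g₀ - 1) * φ ξ := rfl
      have hφξS : φ ξ ≤ φ (a + b) := by
        apply hmono (mem_Ioi.2 hξ0) (mem_Ioi.2 (by linarith)) (by linarith [hξ.2])
      have hba : (0:ℝ) ≤ b - a := by linarith
      calc (φ b - φ a) * a = ((g' ξ * ξ - g ξ * 1) / ξ ^ 2) * a * (b - a) := by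
            rw [hφeq]; ring
        _ ≤ (g₀ - 1) * φ ξ * (b - a) := by
            apply mul_le_mul_of_nonneg_right hbound hba
        _ ≤ (g₀ - 1) * φ (a + b) * (b - a) := by
            apply mul_le_mul_of_nonneg_right _ hba
            apply mul_le_mul_of_nonneg_left hφξS (by linarith)
  -- main vector estimate, for ‖z₁‖ ≤ ‖z₂‖
  have main : ∀ z₁ z₂ : EuclideanSpace ℝ (Fin n), z₁ ≠ 0 → z₂ ≠ 0 → ‖z₁‖ ≤ ‖z₂‖ →
      ‖A z₁ - A z₂‖ ≤ g₀ * (g (‖z₁‖ + ‖z₂‖) / (‖z₁‖ + ‖z₂‖)) * ‖z₁ - z₂‖ := by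
    intro z₁ z₂ h1 h2 hle
    have hr₁ : (0:ℝ) < ‖z₁‖ := norm_pos_iff.2 h1
    have hr₂ : (0:ℝ) < ‖z₂‖ := norm_pos_iff.2 h2
    set r₁ := ‖z₁‖
    set r₂ := ‖z₂‖
    have hS : (0:ℝ) < r₁ + r₂ := by linarith
    have hdecomp : A z₁ - A z₂ = φ r₂ • (z₁ - z₂) + (φ r₁ - φ r₂) • z₁ := by
      rw [hA z₁ h1, hA z₂ h2]
      simp only [hφdef]
      module
    have hφr₂ : φ r₂ ≤ φ (r₁ + r₂) :=
      hmono (mem_Ioi.2 hr₂) (mem_Ioi.2 hS) (by linarith)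
    have hφr₁r₂ : φ r₁ ≤ φ r₂ := hmono (mem_Ioi.2 hr₁) (mem_Ioi.2 hr₂) hle
    have hφpos : 0 < φ r₂ := div_pos (hgpos r₂ hr₂) hr₂
    have hkey := key r₁ r₂ hr₁ hle
    have hnormsub : r₂ - r₁ ≤ ‖z₁ - z₂‖ := by
      have := abs_norm_sub_norm_le z₂ z₁
      rw [norm_sub_rev] at this
      calc r₂ - r₁ ≤ |r₂ - r₁| := le_abs_self _
        _ ≤ ‖z₁ - z₂‖ := this
    calc ‖A z₁ - A z₂‖ = ‖φ r₂ • (z₁ - z₂) + (φ r₁ - φ r₂) • z₁‖ := by rw [hdecomp]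
      _ ≤ ‖φ r₂ • (z₁ - z₂)‖ + ‖(φ r₁ - φ r₂) • z₁‖ := norm_add_le _ _
      _ = φ r₂ * ‖z₁ - z₂‖ + (φ r₂ - φ r₁) * r₁ := by
          rw [norm_smul, norm_smul, Real.norm_eq_abs, Real.norm_eq_abs,
            abs_of_pos hφpos, abs_of_nonpos (by linarith)]
          ring
      _ ≤ φ (r₁ + r₂) * ‖z₁ - z₂‖ + (g₀ - 1) * φ (r₁ + r₂) * (r₂ - r₁) := by
          exact add_le_add (mul_le_mul_of_nonneg_right hφr₂ (norm_nonneg _)) hkey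
      _ ≤ φ (r₁ + r₂) * ‖z₁ - z₂‖ + (g₀ - 1) * φ (r₁ + r₂) * ‖z₁ - z₂‖ := by
          have h0 : 0 < φ (r₁ + r₂) := div_pos (hgpos _ hS) hS
          have : (0:ℝ) ≤ (g₀ - 1) * φ (r₁ + r₂) := by nlinarith
          exact add_le_add_right (mul_le_mul_of_nonneg_left hnormsub this) _
      _ = g₀ * φ (r₁ + r₂) * ‖z₁ - z₂‖ := by ring
      _ = g₀ * (g (r₁ + r₂) / (r₁ + r₂)) * ‖z₁ - z₂‖ := rfl
  intro z₁ z₂ h1 h2 _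
  rcases le_total ‖z₁‖ ‖z₂‖ with h | h
  · exact main z₁ z₂ h1 h2 h
  · have := main z₂ z₁ h2 h1 h
    rw [norm_sub_rev (A z₂), norm_sub_rev z₂, add_comm ‖z₂‖] at this
    exact this
end

section
/- Let G be an N-function with G' = g satisfying the Lieberman condition δ ≤ t g'(t)/g(t) ≤ g₀ (0 < δ ≤ g₀), and define V_G(z) = (g(|z|)/|z|)^{1/2} z for z ≠ 0 and V_G(0)=0. If δ ≥ 1, then there is a constant C = C(δ, g₀) > 0 such that for all z₁, z₂ ∈ ℝⁿ: G(|z₁ − z₂|) ≤ C·|V_G(z₁) − V_G(z₂)|². -/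
open Real Set

/-- Key algebraic inequality: affine in `p`, checked at both endpoints. -/
lemma stmt10_key (h₁ h₂ r₁ r₂ p : ℝ) (hh₂ : 0 ≤ h₂) (hh : h₂ ≤ h₁) (hr₂ : 0 ≤ r₂)
    (hr : r₂ ≤ r₁) (hp : |p| ≤ r₁ * r₂) :
    (1/4) * h₁^2 * (r₁^2 + r₂^2 - 2*p) ≤ (h₁*r₁)^2 + (h₂*r₂)^2 - 2*(h₁*h₂)*p := by
  have hr₁ : 0 ≤ r₁ := le_trans hr₂ hr
  have hh₁ : 0 ≤ h₁ := le_trans hh₂ hh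
  have hp1 : p ≤ r₁ * r₂ := le_of_abs_le hp
  have hp2 : -(r₁*r₂) ≤ p := neg_le_of_abs_le hp
  have e1 : 0 ≤ 2*(h₁*r₁ + h₂*r₂) - h₁*(r₁+r₂) := by
    nlinarith [mul_nonneg hh₂ hr₂, mul_nonneg hh₁ (sub_nonneg.2 hr)]
  have e2 : 0 ≤ h₁*(r₁+r₂) := mul_nonneg hh₁ (by linarith)
  have hA : 0 ≤ (h₁*r₁ + h₂*r₂)^2 - (1/4)*h₁^2*(r₁+r₂)^2 := by
    nlinarith [mul_nonneg e1 (by linarith : 0 ≤ 2*(h₁*r₁+h₂*r₂) + h₁*(r₁+r₂))]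
  have f1 : h₂*r₂ ≤ h₁*r₂ := mul_le_mul_of_nonneg_right hh hr₂
  have f2 : 0 ≤ h₁*(r₁-r₂) := mul_nonneg hh₁ (by linarith)
  have hB : 0 ≤ (h₁*r₁ - h₂*r₂)^2 - (1/4)*h₁^2*(r₁-r₂)^2 := by
    nlinarith [mul_nonneg (by linarith : 0 ≤ h₁*r₁ - h₂*r₂ - h₁*(r₁-r₂))
      (by linarith : 0 ≤ h₁*r₁ - h₂*r₂ + h₁*(r₁-r₂)), sq_nonneg (h₁*(r₁-r₂))]
  rcases eq_or_lt_of_le hr₂ with h0 | h0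
  · have hr20 : r₂ = 0 := h0.symm
    have hp0 : p = 0 := by
      have : |p| ≤ 0 := by rw [hr20] at hp; simpa using hp
      exact abs_eq_zero.1 (le_antisymm this (abs_nonneg p))
    subst hr20; subst hp0
    nlinarith [sq_nonneg (h₁*r₁)]
  · have hrr : 0 < r₁*r₂ := mul_pos (lt_of_lt_of_le h0 hr) h0
    have P1 : 0 ≤ (r₁*r₂ - p) * ((h₁*r₁ + h₂*r₂)^2 - (1/4)*h₁^2*(r₁+r₂)^2) :=
      mul_nonneg (by linarith) hA
    have P2 : 0 ≤ (r₁*r₂ + p) * ((h₁*r₁ - h₂*r₂)^2 - (1/4)*h₁^2*(r₁-r₂)^2) :=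
      mul_nonneg (by linarith) hB
    have hid : 2*(r₁*r₂) * (((h₁*r₁)^2 + (h₂*r₂)^2 - 2*(h₁*h₂)*p)
          - (1/4) * h₁^2 * (r₁^2 + r₂^2 - 2*p))
        = (r₁*r₂ - p) * ((h₁*r₁ + h₂*r₂)^2 - (1/4)*h₁^2*(r₁+r₂)^2)
          + (r₁*r₂ + p) * ((h₁*r₁ - h₂*r₂)^2 - (1/4)*h₁^2*(r₁-r₂)^2) := by ring
    nlinarith [P1, P2, hid, hrr]

/-- Inequality (2.12): for `G ∈ 𝒢(δ,g₀)` with `δ ≥ 1`, and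
`V_G(z) = (g(‖z‖)/‖z‖)^{1/2} z` (`V_G(0) = 0`), there exists `C = C(δ,g₀) > 0`
such that `G(‖z₁ − z₂‖) ≤ C ‖V_G z₁ − V_G z₂‖²` for all `z₁, z₂`. -/
theorem stmt10 (n : ℕ) (G g g' : ℝ → ℝ) (δ g₀ : ℝ) (hδ : 1 ≤ δ) (hδg₀ : δ ≤ g₀)
    (hG0 : G 0 = 0) (hGcont : ContinuousOn G (Set.Ici 0))
    (hGnonneg : ∀ t, 0 ≤ t → 0 ≤ G t)
    (hGderiv : ∀ s, 0 < s → HasDerivAt G (g s) s)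
    (hgpos : ∀ s, 0 < s → 0 < g s)
    (hgderiv : ∀ s, 0 < s → HasDerivAt g (g' s) s)
    (hlieb : ∀ s, 0 < s → δ ≤ s * g' s / g s ∧ s * g' s / g s ≤ g₀)
    (V : EuclideanSpace ℝ (Fin n) → EuclideanSpace ℝ (Fin n))
    (hV0 : V 0 = 0)
    (hV : ∀ z, z ≠ 0 → V z = Real.sqrt (g ‖z‖ / ‖z‖) • z) :
    ∃ C > (0:ℝ), ∀ z₁ z₂ : EuclideanSpace ℝ (Fin n),
      G ‖z₁ - z₂‖ ≤ C * ‖V z₁ - V z₂‖ ^ 2 := by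
  have hgcont : ContinuousOn g (Set.Ioi 0) := fun x hx =>
    ((hgderiv x hx).continuousAt).continuousWithinAt
  -- g' > 0 on (0,∞)
  have hg'pos : ∀ s, 0 < s → 0 < g' s := by
    intro s hs
    have h1 := (hlieb s hs).1
    have hg := hgpos s hs
    have hδg : δ * g s ≤ s * g' s := (le_div_iff₀ hg).1 h1
    nlinarith
  -- g strictly monotone on (0,∞)
  have hgmono : StrictMonoOn g (Set.Ioi 0) := by
    apply strictMonoOn_of_deriv_pos (convex_Ioi 0) hgcont
    intro x hx
    rw [interior_Ioi] at hx
    rw [(hgderiv x hx).deriv]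
    exact hg'pos x hx
  -- ratio t ↦ g t / t monotone on (0,∞)  (uses δ ≥ 1)
  have hq : MonotoneOn (fun t => g t / t) (Set.Ioi 0) := by
    apply monotoneOn_of_deriv_nonneg (convex_Ioi 0)
    · exact hgcont.div continuousOn_id (fun x hx => ne_of_gt hx)
    · rw [interior_Ioi]
      intro x hx
      exact ((hgderiv x hx).div (hasDerivAt_id x)
        (ne_of_gt hx)).differentiableAt.differentiableWithinAt
    · rw [interior_Ioi]
      intro x hx
      have hd : HasDerivAt (fun t => g t / t) ((g' x * x - g x * 1) / x ^ 2) x :=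
        (hgderiv x hx).div (hasDerivAt_id x) (ne_of_gt hx)
      rw [hd.deriv]
      have h1 := (hlieb x hx).1
      have hg := hgpos x hx
      have hδg : δ * g x ≤ x * g' x := (le_div_iff₀ hg).1 h1
      have hnum : 0 ≤ g' x * x - g x * 1 := by nlinarith
      exact div_nonneg hnum (sq_nonneg x)
  -- t ↦ g t / t ^ g₀ antitone on (0,∞)
  have hrpow : ∀ x : ℝ, 0 < x → HasDerivAt (fun t : ℝ => t ^ g₀) (g₀ * x ^ (g₀ - 1)) x :=
    fun x hx => Real.hasDerivAt_rpow_const (Or.inl (ne_of_gt hx))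
  have hφ : AntitoneOn (fun t => g t / t ^ g₀) (Set.Ioi 0) := by
    apply antitoneOn_of_deriv_nonpos (convex_Ioi 0)
    · exact hgcont.div (fun x hx => ((hrpow x hx).continuousAt).continuousWithinAt)
        (fun x hx => ne_of_gt (Real.rpow_pos_of_pos hx g₀))
    · rw [interior_Ioi]
      intro x hx
      exact ((hgderiv x hx).div (hrpow x hx)
        (ne_of_gt (Real.rpow_pos_of_pos hx g₀))).differentiableAt.differentiableWithinAt
    · rw [interior_Ioi]
      intro x hx
      have hd : HasDerivAt (fun t => g t / t ^ g₀)
          ((g' x * x ^ g₀ - g x * (g₀ * x ^ (g₀ - 1))) / (x ^ g₀) ^ 2) x :=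
        (hgderiv x hx).div (hrpow x hx) (ne_of_gt (Real.rpow_pos_of_pos hx g₀))
      rw [hd.deriv]
      apply div_nonpos_of_nonpos_of_nonneg _ (sq_nonneg _)
      have h2 := (hlieb x hx).2
      have hg := hgpos x hx
      have hxg' : x * g' x ≤ g₀ * g x := (div_le_iff₀ hg).1 h2
      have hxpow : x ^ (g₀ - 1) * x = x ^ g₀ := by
        rw [← Real.rpow_add_one (ne_of_gt hx)]
        norm_num
      have hpownn : (0:ℝ) ≤ x ^ (g₀ - 1) := le_of_lt (Real.rpow_pos_of_pos hx _)
      have hmul := mul_le_mul_of_nonneg_left hxg' hpownn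
      have e1 : g' x * x ^ g₀ = x ^ (g₀ - 1) * (x * g' x) := by rw [← hxpow]; ring
      have e2 : g x * (g₀ * x ^ (g₀ - 1)) = x ^ (g₀ - 1) * (g₀ * g x) := by ring
      linarith
  -- doubling
  have hdouble : ∀ r : ℝ, 0 < r → g (2*r) ≤ (2:ℝ) ^ g₀ * g r := by
    intro r hr
    have h2r : (0:ℝ) < 2*r := by linarith
    have hφ' := hφ (Set.mem_Ioi.2 hr) (Set.mem_Ioi.2 h2r) (by linarith)
    have hpow : (2*r) ^ g₀ = (2:ℝ) ^ g₀ * r ^ g₀ := Real.mul_rpow (by norm_num) hr.le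
    rw [div_le_div_iff₀ (Real.rpow_pos_of_pos h2r g₀) (Real.rpow_pos_of_pos hr g₀), hpow] at hφ'
    have hrg : (0:ℝ) < r ^ g₀ := Real.rpow_pos_of_pos hr g₀
    exact le_of_mul_le_mul_right (by nlinarith) hrg
  -- G s ≤ s * g s
  have hGle : ∀ s : ℝ, 0 < s → G s ≤ s * g s := by
    intro s hs
    have hmono : MonotoneOn (fun t => t * g s - G t) (Set.Icc 0 s) := by
      apply monotoneOn_of_deriv_nonneg (convex_Icc 0 s)
      · exact (continuousOn_id.mul continuousOn_const).sub
          (hGcont.mono (fun x hx => hx.1))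
      · rw [interior_Icc]
        intro x hx
        exact (((hasDerivAt_id x).mul_const (g s)).sub
          (hGderiv x hx.1)).differentiableAt.differentiableWithinAt
      · rw [interior_Icc]
        intro x hx
        have hd : HasDerivAt (fun t => t * g s - G t) (1 * g s - g x) x :=
          ((hasDerivAt_id x).mul_const (g s)).sub (hGderiv x hx.1)
        rw [hd.deriv]
        have : g x ≤ g s := le_of_lt (hgmono (Set.mem_Ioi.2 hx.1)
          (Set.mem_Ioi.2 (lt_trans hx.1 hx.2)) hx.2)
        linarith
    have h := hmono (Set.left_mem_Icc.2 hs.le) (Set.right_mem_Icc.2 hs.le) hs.le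
    simp only [zero_mul, hG0, sub_zero] at h
    linarith
  -- the constant
  refine ⟨2 * (2:ℝ) ^ g₀, by positivity, ?_⟩
  have hVf : ∀ z : EuclideanSpace ℝ (Fin n), V z = Real.sqrt (g ‖z‖ / ‖z‖) • z := by
    intro z
    by_cases hz : z = 0
    · simp [hz, hV0]
    · exact hV z hz
  suffices key2 : ∀ z₁ z₂ : EuclideanSpace ℝ (Fin n), ‖z₂‖ ≤ ‖z₁‖ →
      G ‖z₁ - z₂‖ ≤ 2 * (2:ℝ) ^ g₀ * ‖V z₁ - V z₂‖ ^ 2 by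
    intro z₁ z₂
    rcases le_total ‖z₂‖ ‖z₁‖ with h | h
    · exact key2 z₁ z₂ h
    · rw [norm_sub_rev z₁ z₂, norm_sub_rev (V z₁) (V z₂)]
      exact key2 z₂ z₁ h
  intro z₁ z₂ hle
  by_cases hz₁ : z₁ = 0
  · have hz₂ : z₂ = 0 := by
      have : ‖z₂‖ ≤ 0 := by simpa [hz₁] using hle
      exact norm_le_zero_iff.1 this
    simp [hz₁, hz₂, hG0]
  · have hr₁ : 0 < ‖z₁‖ := norm_pos_iff.2 hz₁
    set r₁ := ‖z₁‖ with hr₁def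
    set r₂ := ‖z₂‖ with hr₂def
    set h₁ := Real.sqrt (g r₁ / r₁) with hh₁def
    set h₂ := Real.sqrt (g r₂ / r₂) with hh₂def
    have hh₂0 : 0 ≤ h₂ := Real.sqrt_nonneg _
    have hh₁sq : h₁ ^ 2 = g r₁ / r₁ := Real.sq_sqrt (div_nonneg (hgpos r₁ hr₁).le hr₁.le)
    have hh : h₂ ≤ h₁ := by
      by_cases hz₂ : z₂ = 0
      · have : r₂ = 0 := by rw [hr₂def, hz₂, norm_zero]
        rw [hh₂def, this, div_zero, Real.sqrt_zero]
        exact Real.sqrt_nonneg _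
      · have hr₂p : 0 < r₂ := norm_pos_iff.2 hz₂
        exact Real.sqrt_le_sqrt (hq (Set.mem_Ioi.2 hr₂p) (Set.mem_Ioi.2 hr₁) hle)
    have hnorm : ‖V z₁ - V z₂‖ ^ 2
        = (h₁*r₁)^2 + (h₂*r₂)^2 - 2*(h₁*h₂) * (inner ℝ z₁ z₂ : ℝ) := by
      rw [hVf z₁, hVf z₂, norm_sub_sq_real, norm_smul, norm_smul,
        real_inner_smul_left, real_inner_smul_right,
        Real.norm_eq_abs, Real.norm_eq_abs, abs_of_nonneg (Real.sqrt_nonneg _),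
        abs_of_nonneg (Real.sqrt_nonneg _)]
      ring
    have hnorm2 : ‖z₁ - z₂‖ ^ 2 = r₁^2 + r₂^2 - 2*(inner ℝ z₁ z₂ : ℝ) := by
      rw [norm_sub_sq_real]; ring
    have hkey := stmt10_key h₁ h₂ r₁ r₂ (inner ℝ z₁ z₂ : ℝ) hh₂0 hh (norm_nonneg z₂) hle
      (abs_real_inner_le_norm z₁ z₂)
    have hmain : (1/4) * (g r₁ / r₁) * ‖z₁ - z₂‖ ^ 2 ≤ ‖V z₁ - V z₂‖ ^ 2 := by
      rw [hnorm, hnorm2, ← hh₁sq]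
      exact hkey
    set s := ‖z₁ - z₂‖ with hsdef
    have hs2 : s ≤ 2 * r₁ := by
      have h := norm_sub_le z₁ z₂
      rw [← hsdef, ← hr₁def, ← hr₂def] at h
      linarith
    set P := (2:ℝ) ^ g₀ with hPdef
    have hP : 0 < P := Real.rpow_pos_of_pos (by norm_num) g₀
    have hG2 : G s ≤ P / 2 * (g r₁ / r₁) * s ^ 2 := by
      rcases eq_or_lt_of_le (norm_nonneg (z₁ - z₂)) with h0 | h0
      · rw [← hsdef] at h0
        rw [← h0, hG0]
        have : (0:ℝ) ≤ g r₁ / r₁ := div_nonneg (hgpos r₁ hr₁).le hr₁.le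
        positivity
      · rw [← hsdef] at h0
        have h1 := hGle s h0
        have h2 : g s / s ≤ g (2*r₁) / (2*r₁) :=
          hq (Set.mem_Ioi.2 h0) (Set.mem_Ioi.2 (by linarith)) hs2
        have h3 := hdouble r₁ hr₁
        have h2' : g s * (2*r₁) ≤ g (2*r₁) * s := by
          rw [div_le_div_iff₀ h0 (by linarith)] at h2
          linarith
        have a1 : G s * (2*r₁) ≤ (s * g s) * (2*r₁) :=
          mul_le_mul_of_nonneg_right h1 (by linarith)
        have a3 : s * (g s * (2*r₁)) ≤ s * (g (2*r₁) * s) :=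
          mul_le_mul_of_nonneg_left h2' h0.le
        have a4 : s * s * g (2*r₁) ≤ s * s * (P * g r₁) :=
          mul_le_mul_of_nonneg_left h3 (mul_nonneg h0.le h0.le)
        have goal' : G s * (2*r₁) ≤ P * g r₁ * s ^ 2 := by
          have e : (s * g s) * (2*r₁) = s * (g s * (2*r₁)) := by ring
          have e2 : s * (g (2*r₁) * s) = s * s * g (2*r₁) := by ring
          have e3 : s * s * (P * g r₁) = P * g r₁ * s ^ 2 := by ring
          linarith
        have heq : P / 2 * (g r₁ / r₁) * s ^ 2 = P * g r₁ * s ^ 2 / (2*r₁) := by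
          field_simp
        rw [heq, le_div_iff₀ (by linarith)]
        linarith
    have hfin := mul_le_mul_of_nonneg_left hmain (le_of_lt (by positivity : (0:ℝ) < 2*P))
    calc G s ≤ P / 2 * (g r₁ / r₁) * s ^ 2 := hG2
      _ ≤ 2 * P * ‖V z₁ - V z₂‖ ^ 2 := by
          have e : 2 * P * ((1/4) * (g r₁ / r₁) * s ^ 2) = P / 2 * (g r₁ / r₁) * s ^ 2 := by ring
          linarith [hfin]
end

section
/- Let G ∈ 𝒢(δ,g₀) with δ > 0, and define V_G(z) = (g(|z|)/|z|)^{1/2} z (V_G(0)=0), where g = G'. Then there exist constants c₁, c₂ > 0 depending only on δ and g₀ such that for all z₁, z₂ ∈ ℝⁿ: c₁·⟨ (g(|z₁|)/|z₁|)z₁ − (g(|z₂|)/|z₂|)z₂ , z₁ − z₂ ⟩ ≤ |V_G(z₁) − V_G(z₂)|² ≤ c₂·⟨ (g(|z₁|)/|z₁|)z₁ − (g(|z₂|)/|z₂|)z₂ , z₁ − z₂ ⟩. -/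
open Real



/-- Bernoulli consequence: for `0 < θ ≤ 1`, `1 ≤ u`: `θ(u-1) ≤ u(u^θ - 1)`. -/
lemma my_bern1 {θ u : ℝ} (hθ0 : 0 < θ) (hθ1 : θ ≤ 1) (hu : 1 ≤ u) :
    θ * (u - 1) ≤ u * (u ^ θ - 1) := by
  have hu0 : 0 < u := lt_of_lt_of_le one_pos hu
  have hs : (-1 : ℝ) ≤ 1 / u - 1 := by
    have : 0 < 1 / u := by positivity
    linarith
  have hber := rpow_one_add_le_one_add_mul_self hs hθ0.le hθ1
  have hrw : (1 : ℝ) + (1 / u - 1) = 1 / u := by ring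
  rw [hrw] at hber
  have hx : (1 / u) ^ θ = (u ^ θ)⁻¹ := by
    rw [one_div, ← Real.inv_rpow hu0.le]
  rw [hx] at hber
  set x := u ^ θ with hxdef
  have hxpos : 0 < x := Real.rpow_pos_of_pos hu0 θ
  have hx1 : 1 ≤ x := Real.one_le_rpow hu hθ0.le
  -- hber : x⁻¹ ≤ 1 + θ * (1/u - 1)
  have hber2 : 1 ≤ x * (1 + θ * (1 / u - 1)) := by
    calc (1:ℝ) = x * x⁻¹ := (mul_inv_cancel₀ hxpos.ne').symm
    _ ≤ x * (1 + θ * (1 / u - 1)) := by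
        exact mul_le_mul_of_nonneg_left hber hxpos.le
  have hber3 : u ≤ u * x + θ * x - θ * x * u := by
    have h := mul_le_mul_of_nonneg_left hber2 hu0.le
    have he : u * (x * (1 + θ * (1 / u - 1))) = u * x + θ * x - θ * x * u := by
      field_simp
      ring
    rw [he] at h
    linarith
  nlinarith [mul_nonneg (mul_nonneg hθ0.le (sub_nonneg.mpr hx1)) (sub_nonneg.mpr hu)]

/-- Bernoulli consequence: for `1 ≤ m`, `1 ≤ x ≤ 2`: `x^m - 1 ≤ m·2^(m-1)·(x-1)`. -/
lemma my_bern2 {m x : ℝ} (hm : 1 ≤ m) (hx : 1 ≤ x) (hx2 : x ≤ 2) :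
    x ^ m - 1 ≤ m * 2 ^ (m - 1) * (x - 1) := by
  have hx0 : 0 < x := lt_of_lt_of_le one_pos hx
  set t := x ^ (m - 1) with htdef
  have ht0 : 0 < t := Real.rpow_pos_of_pos hx0 _
  have hxt : x ^ m = t * x := by
    have h := (Real.rpow_add hx0 (m - 1) 1).symm
    rw [Real.rpow_one] at h
    rw [show m - 1 + 1 = m by ring] at h
    rw [htdef, h]
  have ht2 : t ≤ 2 ^ (m - 1) := Real.rpow_le_rpow hx0.le hx2 (by linarith)
  have hs : (-1 : ℝ) ≤ 1 / x - 1 := by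
    have : 0 < 1 / x := by positivity
    linarith
  have hber := one_add_mul_self_le_rpow_one_add hs hm
  have hrw : (1 : ℝ) + (1 / x - 1) = 1 / x := by ring
  rw [hrw] at hber
  have hinv : (1 / x) ^ m = (x ^ m)⁻¹ := by
    rw [one_div, ← Real.inv_rpow hx0.le]
  rw [hinv, hxt] at hber
  -- hber : 1 + m * (1/x - 1) ≤ (t*x)⁻¹
  have htx : 0 < t * x := mul_pos ht0 hx0
  have hber2 : (t * x) * (1 + m * (1 / x - 1)) ≤ 1 := by
    calc (t * x) * (1 + m * (1 / x - 1)) ≤ (t * x) * (t * x)⁻¹ :=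
          mul_le_mul_of_nonneg_left hber htx.le
    _ = 1 := mul_inv_cancel₀ htx.ne'
  have he : (t * x) * (1 + m * (1 / x - 1)) = t * x + m * t - m * t * x := by
    field_simp; ring
  rw [he] at hber2
  -- t*x - 1 ≤ m*t*(x-1) ≤ m*2^(m-1)*(x-1)
  rw [hxt]
  have h2 : t * (x - 1) ≤ 2 ^ (m - 1) * (x - 1) :=
    mul_le_mul_of_nonneg_right ht2 (by linarith)
  nlinarith [mul_le_mul_of_nonneg_left h2 (by linarith : (0:ℝ) ≤ m)]

/-- Core algebraic lower bound: `(u²-1)(v²-1) ≤ 4(uv-1)²` for `u, v ≥ 1`. -/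
lemma my_core_lower {u v : ℝ} (hu : 1 ≤ u) (hv : 1 ≤ v) :
    (u ^ 2 - 1) * (v ^ 2 - 1) ≤ 4 * (u * v - 1) ^ 2 := by
  have h1 : (u - 1) * (v + 1) / 2 ≤ u * v - 1 := by nlinarith
  have h2 : (v - 1) * (u + 1) / 2 ≤ u * v - 1 := by nlinarith
  have h1' : 0 ≤ (u - 1) * (v + 1) / 2 := by nlinarith
  have h2' : 0 ≤ (v - 1) * (u + 1) / 2 := by nlinarith
  nlinarith [mul_le_mul h1 h2 h2' (by nlinarith : (0:ℝ) ≤ u * v - 1)]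

/-- Core algebraic upper bound. -/
lemma my_core_upper {θ M u v : ℝ} (hθ0 : 0 < θ) (hM : 1 ≤ M) (hu : 1 ≤ u) (hv : 1 ≤ v)
    (h1 : θ * (u - 1) ≤ u * (v ^ 2 - 1))
    (h2 : u ^ 2 ≤ 2 → v ^ 2 - 1 ≤ M * (u ^ 2 - 1)) :
    (u * v - 1) ^ 2 ≤ (2 * (1 + 1 / θ) + 2 * M) * ((u ^ 2 - 1) * (v ^ 2 - 1)) := by
  have hR : 0 ≤ (u ^ 2 - 1) * (v ^ 2 - 1) :=
    mul_nonneg (by nlinarith) (by nlinarith)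
  have hA1 : (u - 1) ^ 2 * (v ^ 2 - 1) ≤ (u ^ 2 - 1) * (v ^ 2 - 1) := by nlinarith
  have hA2 : θ * (u - 1) ^ 2 ≤ (u ^ 2 - 1) * (v ^ 2 - 1) := by nlinarith
  have hA2' : (u - 1) ^ 2 ≤ 1 / θ * ((u ^ 2 - 1) * (v ^ 2 - 1)) := by
    have key := mul_le_mul_of_nonneg_left hA2 (inv_pos.mpr hθ0).le
    rw [← mul_assoc, inv_mul_cancel₀ hθ0.ne', one_mul] at key
    rw [one_div]
    exact key
  have hB : (v - 1) ^ 2 ≤ M * ((u ^ 2 - 1) * (v ^ 2 - 1)) := by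
    rcases le_or_gt (u ^ 2) 2 with hc | hc
    · have := h2 hc
      nlinarith [mul_le_mul_of_nonneg_right this (by linarith : (0:ℝ) ≤ v - 1)]
    · nlinarith
  nlinarith [hA1, hA2', hB]

noncomputable def myc2 (δ g₀ : ℝ) : ℝ :=
  2 * (1 + 1 / min δ 1) + 2 * (max g₀ 1 * (2:ℝ) ^ (max g₀ 1 - 1))

set_option maxHeartbeats 1000000 in
lemma my_endpoint (δ g₀ p q a b : ℝ) (hδ : 0 < δ) (hδg₀ : δ ≤ g₀)
    (hp : 0 < p) (hq : 0 < q) (hb : 0 < b) (hba : b ≤ a)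
    (hgm : q ^ 2 * b ≤ p ^ 2 * a)
    (hlow : q ^ 2 * b * a ^ δ ≤ p ^ 2 * a * b ^ δ)
    (hhigh : p ^ 2 * a * b ^ g₀ ≤ q ^ 2 * b * a ^ g₀) :
    (a - b) * (p ^ 2 * a - q ^ 2 * b) ≤ 4 * (p * a - q * b) ^ 2 ∧
    (p * a - q * b) ^ 2 ≤ myc2 δ g₀ * ((a - b) * (p ^ 2 * a - q ^ 2 * b)) := by
  have ha : 0 < a := lt_of_lt_of_le hb hba
  set θ := min δ 1 with hθdef
  set m := max g₀ 1 with hmdef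
  set M := m * (2:ℝ) ^ (m - 1) with hMdef
  have hθ0 : 0 < θ := lt_min hδ one_pos
  have hθ1 : θ ≤ 1 := min_le_right _ _
  have hm1 : 1 ≤ m := le_max_right _ _
  have hM1 : 1 ≤ M := by
    have h1 : (1:ℝ) ≤ (2:ℝ) ^ (m - 1) := Real.one_le_rpow (by norm_num) (by linarith)
    nlinarith
  clear_value θ m M
  set u := Real.sqrt (a / b) with hudef
  set v := Real.sqrt (p ^ 2 * a / (q ^ 2 * b)) with hvdef
  have hqb : 0 < q ^ 2 * b := by positivity
  have hpa : 0 < p ^ 2 * a := by positivity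
  have hu2 : u ^ 2 = a / b := Real.sq_sqrt (by positivity)
  have hv2 : v ^ 2 = p ^ 2 * a / (q ^ 2 * b) := Real.sq_sqrt (by positivity)
  have hu1 : 1 ≤ u := Real.one_le_sqrt.mpr ((one_le_div hb).mpr hba)
  have hv1 : 1 ≤ v := Real.one_le_sqrt.mpr ((one_le_div hqb).mpr hgm)
  have hu0 : 0 < u := lt_of_lt_of_le one_pos hu1
  have huv : u * v = p * a / (q * b) := by
    rw [hudef, hvdef, ← Real.sqrt_mul (by positivity)]
    rw [show a / b * (p ^ 2 * a / (q ^ 2 * b)) = (p * a / (q * b)) ^ 2 by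
      field_simp]
    exact Real.sqrt_sq (by positivity)
  clear_value u v
  have hqbuv : q * b * (u * v) = p * a := by
    rw [huv]; field_simp
  have e1 : (p * a - q * b) ^ 2 = q ^ 2 * b ^ 2 * (u * v - 1) ^ 2 := by
    rw [← hqbuv]; ring
  have ea : a = b * u ^ 2 := by rw [hu2]; field_simp
  have eg : p ^ 2 * a = q ^ 2 * b * v ^ 2 := by rw [hv2]; field_simp
  have e2 : (a - b) * (p ^ 2 * a - q ^ 2 * b) = q ^ 2 * b ^ 2 * ((u ^ 2 - 1) * (v ^ 2 - 1)) := by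
    rw [eg]
    nth_rewrite 1 [ea]
    ring
  -- hypothesis for core_upper
  have hrlow : (a / b) ^ δ ≤ v ^ 2 := by
    rw [hv2, Real.div_rpow ha.le hb.le, div_le_div_iff₀ (Real.rpow_pos_of_pos hb δ) hqb]
    calc a ^ δ * (q ^ 2 * b) = q ^ 2 * b * a ^ δ := by ring
    _ ≤ p ^ 2 * a * b ^ δ := hlow
  have hθcore : θ * (u - 1) ≤ u * (v ^ 2 - 1) := by
    have hb1 := my_bern1 hθ0 hθ1 hu1
    have h2 : u ^ θ ≤ v ^ 2 := by
      have ha1 : u ^ θ ≤ u ^ (2 * δ) :=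
        Real.rpow_le_rpow_of_exponent_le hu1 (by
          have := min_le_left δ 1; linarith)
      have ha2 : u ^ (2 * δ) = (u ^ 2 : ℝ) ^ δ := by
        rw [Real.rpow_mul hu0.le, show ((2:ℝ)) = ((2:ℕ):ℝ) by norm_num,
          Real.rpow_natCast]
      rw [ha2, hu2] at ha1
      exact le_trans ha1 hrlow
    have h3 : u * u ^ θ ≤ u * v ^ 2 := mul_le_mul_of_nonneg_left h2 hu0.le
    nlinarith [hb1, h3]
  have hBcore : u ^ 2 ≤ 2 → v ^ 2 - 1 ≤ M * (u ^ 2 - 1) := by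
    intro hc
    have hx1 : (1:ℝ) ≤ u ^ 2 := by nlinarith
    have hrhigh : v ^ 2 ≤ (a / b) ^ g₀ := by
      rw [hv2, Real.div_rpow ha.le hb.le, div_le_div_iff₀ hqb (Real.rpow_pos_of_pos hb g₀)]
      calc p ^ 2 * a * b ^ g₀ ≤ q ^ 2 * b * a ^ g₀ := hhigh
      _ = a ^ g₀ * (q ^ 2 * b) := by ring
    have hmm : (a / b) ^ g₀ ≤ (u ^ 2 : ℝ) ^ m := by
      rw [← hu2]
      rw [hmdef]
      exact Real.rpow_le_rpow_of_exponent_le hx1 (le_max_left _ _)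
    have hb2 := my_bern2 hm1 hx1 hc
    have := le_trans hrhigh hmm
    rw [hMdef]
    linarith
  have core1 := my_core_lower hu1 hv1
  have core2 := my_core_upper hθ0 hM1 hu1 hv1 hθcore hBcore
  have hc2eq : myc2 δ g₀ = 2 * (1 + 1 / θ) + 2 * M := by
    unfold myc2
    rw [hθdef, hMdef, hmdef]
  constructor
  · rw [e1, e2]
    nlinarith [mul_le_mul_of_nonneg_left core1 (by positivity : (0:ℝ) ≤ q ^ 2 * b ^ 2)]
  · rw [e1, e2, hc2eq]
    nlinarith [mul_le_mul_of_nonneg_left core2 (by positivity : (0:ℝ) ≤ q ^ 2 * b ^ 2)]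


lemma my_hasDeriv_aux (g g' : ℝ → ℝ) (γ : ℝ)
    (hgderiv : ∀ s, 0 < s → HasDerivAt g (g' s) s) {t : ℝ} (ht : 0 < t) :
    HasDerivAt (fun t => g t * t ^ (-γ)) (g' t * t ^ (-γ) + g t * (-γ * t ^ (-γ - 1))) t :=
  (hgderiv t ht).mul (Real.hasDerivAt_rpow_const (Or.inl ht.ne'))

lemma my_mono_rpow (g g' : ℝ → ℝ) (γ : ℝ)
    (hgderiv : ∀ s, 0 < s → HasDerivAt g (g' s) s)
    (hkey : ∀ s, 0 < s → 0 ≤ s * g' s - γ * g s)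
    {a b : ℝ} (hb : 0 < b) (hba : b ≤ a) :
    g b * b ^ (-γ) ≤ g a * a ^ (-γ) := by
  have hmono : MonotoneOn (fun t => g t * t ^ (-γ)) (Set.Icc b a) := by
    apply monotoneOn_of_deriv_nonneg (convex_Icc b a)
    · intro t ht
      exact (my_hasDeriv_aux g g' γ hgderiv (lt_of_lt_of_le hb ht.1)).continuousAt.continuousWithinAt
    · intro t ht
      rw [interior_Icc] at ht
      exact (my_hasDeriv_aux g g' γ hgderiv (hb.trans ht.1)).differentiableAt.differentiableWithinAt
    · intro t ht
      rw [interior_Icc] at ht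
      have ht0 : 0 < t := hb.trans ht.1
      rw [(my_hasDeriv_aux g g' γ hgderiv ht0).deriv]
      have h1 : t ^ (-γ) = t ^ (-γ - 1) * t := by
        have h := Real.rpow_add_one ht0.ne' (-γ - 1)
        rw [show -γ - 1 + 1 = -γ by ring] at h
        exact h
      have h2 : (0:ℝ) < t ^ (-γ - 1) := Real.rpow_pos_of_pos ht0 _
      have h3 := hkey t ht0
      rw [h1]
      nlinarith [mul_nonneg h2.le h3]
  exact hmono (Set.left_mem_Icc.mpr hba) (Set.right_mem_Icc.mpr hba) hba

lemma my_anti_rpow (g g' : ℝ → ℝ) (γ : ℝ)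
    (hgderiv : ∀ s, 0 < s → HasDerivAt g (g' s) s)
    (hkey : ∀ s, 0 < s → s * g' s - γ * g s ≤ 0)
    {a b : ℝ} (hb : 0 < b) (hba : b ≤ a) :
    g a * a ^ (-γ) ≤ g b * b ^ (-γ) := by
  have hanti : AntitoneOn (fun t => g t * t ^ (-γ)) (Set.Icc b a) := by
    apply antitoneOn_of_deriv_nonpos (convex_Icc b a)
    · intro t ht
      exact (my_hasDeriv_aux g g' γ hgderiv (lt_of_lt_of_le hb ht.1)).continuousAt.continuousWithinAt
    · intro t ht
      rw [interior_Icc] at ht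
      exact (my_hasDeriv_aux g g' γ hgderiv (hb.trans ht.1)).differentiableAt.differentiableWithinAt
    · intro t ht
      rw [interior_Icc] at ht
      have ht0 : 0 < t := hb.trans ht.1
      rw [(my_hasDeriv_aux g g' γ hgderiv ht0).deriv]
      have h1 : t ^ (-γ) = t ^ (-γ - 1) * t := by
        have h := Real.rpow_add_one ht0.ne' (-γ - 1)
        rw [show -γ - 1 + 1 = -γ by ring] at h
        exact h
      have h2 : (0:ℝ) < t ^ (-γ - 1) := Real.rpow_pos_of_pos ht0 _
      have h3 := hkey t ht0
      rw [h1]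
      nlinarith [mul_nonpos_of_nonneg_of_nonpos h2.le h3]
  exact hanti (Set.left_mem_Icc.mpr hba) (Set.right_mem_Icc.mpr hba) hba

lemma my_interp_lo (c X Y Z s ab : ℝ) (hs1 : -ab ≤ s) (hs2 : s ≤ ab)
    (hplus : c * (X - Y * ab) ≤ X - Z * ab)
    (hminus : c * (X + Y * ab) ≤ X + Z * ab) :
    c * (X - Y * s) ≤ X - Z * s := by
  rcases le_total 0 (c * Y - Z) with h | h
  · nlinarith [mul_le_mul_of_nonneg_left hs1 h]
  · nlinarith [mul_le_mul_of_nonpos_left hs2 h]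

lemma my_interp_hi (c X Y Z s ab : ℝ) (hs1 : -ab ≤ s) (hs2 : s ≤ ab)
    (hplus : X - Z * ab ≤ c * (X - Y * ab))
    (hminus : X + Z * ab ≤ c * (X + Y * ab)) :
    X - Z * s ≤ c * (X - Y * s) := by
  rcases le_total 0 (Z - c * Y) with h | h
  · nlinarith [mul_le_mul_of_nonneg_left hs1 h]
  · nlinarith [mul_le_mul_of_nonpos_left hs2 h]

lemma my_scalar (δ g₀ p q a b s : ℝ) (hδ : 0 < δ) (hδg₀ : δ ≤ g₀)
    (hp : 0 < p) (hq : 0 < q) (ha : 0 < a) (hb : 0 < b) (hba : b ≤ a)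
    (hgm : q ^ 2 * b ≤ p ^ 2 * a)
    (hlow : q ^ 2 * b * a ^ δ ≤ p ^ 2 * a * b ^ δ)
    (hhigh : p ^ 2 * a * b ^ g₀ ≤ q ^ 2 * b * a ^ g₀)
    (hs1 : -(a * b) ≤ s) (hs2 : s ≤ a * b) :
    1 / 4 * (p ^ 2 * a ^ 2 + q ^ 2 * b ^ 2 - (p ^ 2 + q ^ 2) * s) ≤
      p ^ 2 * a ^ 2 + q ^ 2 * b ^ 2 - 2 * (p * q) * s ∧
    p ^ 2 * a ^ 2 + q ^ 2 * b ^ 2 - 2 * (p * q) * s ≤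
      myc2 δ g₀ * (p ^ 2 * a ^ 2 + q ^ 2 * b ^ 2 - (p ^ 2 + q ^ 2) * s) := by
  obtain ⟨hepL, hepU⟩ := my_endpoint δ g₀ p q a b hδ hδg₀ hp hq hb hba hgm hlow hhigh
  have hθ0 : 0 < min δ 1 := lt_min hδ one_pos
  have h1θ : 0 < 1 / min δ 1 := by positivity
  have hm1 : (1:ℝ) ≤ max g₀ 1 := le_max_right _ _
  have hpow : (0:ℝ) < (2:ℝ) ^ (max g₀ 1 - 1) := Real.rpow_pos_of_pos two_pos _
  have hpow1 : (1:ℝ) ≤ (2:ℝ) ^ (max g₀ 1 - 1) := Real.one_le_rpow (by norm_num) (by linarith)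
  have hc2two : 2 ≤ myc2 δ g₀ := by unfold myc2; nlinarith
  -- minus endpoint inequalities
  have hemL : (a + b) * (p ^ 2 * a + q ^ 2 * b) ≤ 4 * (p * a + q * b) ^ 2 := by
    nlinarith [mul_le_mul_of_nonneg_left hba (mul_nonneg (sq_nonneg p) ha.le),
      mul_le_mul_of_nonneg_left hgm ha.le, mul_pos (mul_pos hp ha) (mul_pos hq hb),
      mul_le_mul_of_nonneg_left hgm hb.le]
  have hemU : (p * a + q * b) ^ 2 ≤ myc2 δ g₀ * ((a + b) * (p ^ 2 * a + q ^ 2 * b)) := by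
    have h1 : (p * a + q * b) ^ 2 ≤ 2 * ((a + b) * (p ^ 2 * a + q ^ 2 * b)) := by
      nlinarith [sq_nonneg (p * a - q * b), mul_le_mul_of_nonneg_left hba (mul_nonneg (sq_nonneg p) ha.le),
        mul_pos (mul_pos hp ha) (mul_pos hq hb), mul_nonneg (mul_nonneg (sq_nonneg p) ha.le) hb.le,
        mul_nonneg (mul_nonneg (sq_nonneg q) hb.le) ha.le]
    have h2 : 0 ≤ (a + b) * (p ^ 2 * a + q ^ 2 * b) := by positivity
    nlinarith
  constructor
  · have e1 : p ^ 2 * a ^ 2 + q ^ 2 * b ^ 2 - (p ^ 2 + q ^ 2) * (a * b)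
        = (a - b) * (p ^ 2 * a - q ^ 2 * b) := by ring
    have e2 : p ^ 2 * a ^ 2 + q ^ 2 * b ^ 2 - 2 * (p * q) * (a * b) = (p * a - q * b) ^ 2 := by ring
    have e3 : p ^ 2 * a ^ 2 + q ^ 2 * b ^ 2 + (p ^ 2 + q ^ 2) * (a * b)
        = (a + b) * (p ^ 2 * a + q ^ 2 * b) := by ring
    have e4 : p ^ 2 * a ^ 2 + q ^ 2 * b ^ 2 + 2 * (p * q) * (a * b) = (p * a + q * b) ^ 2 := by ring
    apply my_interp_lo _ _ _ _ _ (a * b) hs1 hs2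
    · rw [e1, e2]; linarith
    · rw [e3, e4]; linarith
  · have e1 : p ^ 2 * a ^ 2 + q ^ 2 * b ^ 2 - (p ^ 2 + q ^ 2) * (a * b)
        = (a - b) * (p ^ 2 * a - q ^ 2 * b) := by ring
    have e2 : p ^ 2 * a ^ 2 + q ^ 2 * b ^ 2 - 2 * (p * q) * (a * b) = (p * a - q * b) ^ 2 := by ring
    have e3 : p ^ 2 * a ^ 2 + q ^ 2 * b ^ 2 + (p ^ 2 + q ^ 2) * (a * b)
        = (a + b) * (p ^ 2 * a + q ^ 2 * b) := by ring
    have e4 : p ^ 2 * a ^ 2 + q ^ 2 * b ^ 2 + 2 * (p * q) * (a * b) = (p * a + q * b) ^ 2 := by ring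
    apply my_interp_hi _ _ _ _ _ (a * b) hs1 hs2
    · rw [e1, e2]; linarith
    · rw [e3, e4]; linarith

set_option maxHeartbeats 1000000 in
/-- Lemma 2.5 (monotonicity): for `G ∈ 𝒢(δ,g₀)`, `δ > 0`, with
`A(z) = (g(‖z‖)/‖z‖) z` (`A 0 = 0`) and `V_G(z) = (g(‖z‖)/‖z‖)^{1/2} z`
(`V_G 0 = 0`), there exist `c₁, c₂ > 0` depending only on `δ, g₀` with
`c₁ ⟨A z₁ − A z₂, z₁ − z₂⟩ ≤ ‖V z₁ − V z₂‖² ≤ c₂ ⟨A z₁ − A z₂, z₁ − z₂⟩`. -/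
theorem stmt13 (n : ℕ) (G g g' : ℝ → ℝ) (δ g₀ : ℝ) (hδ : 0 < δ) (hδg₀ : δ ≤ g₀)
    (hG0 : G 0 = 0) (hGcont : ContinuousOn G (Set.Ici 0))
    (hGderiv : ∀ s, 0 < s → HasDerivAt G (g s) s)
    (hgpos : ∀ s, 0 < s → 0 < g s)
    (hgderiv : ∀ s, 0 < s → HasDerivAt g (g' s) s)
    (hlieb : ∀ s, 0 < s → δ ≤ s * g' s / g s ∧ s * g' s / g s ≤ g₀)
    (A V : EuclideanSpace ℝ (Fin n) → EuclideanSpace ℝ (Fin n))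
    (hA0 : A 0 = 0) (hA : ∀ z, z ≠ 0 → A z = (g ‖z‖ / ‖z‖) • z)
    (hV0 : V 0 = 0) (hV : ∀ z, z ≠ 0 → V z = Real.sqrt (g ‖z‖ / ‖z‖) • z) :
    ∃ c₁ > (0:ℝ), ∃ c₂ > (0:ℝ), ∀ z₁ z₂ : EuclideanSpace ℝ (Fin n),
      c₁ * inner ℝ (A z₁ - A z₂) (z₁ - z₂) ≤ ‖V z₁ - V z₂‖ ^ 2 ∧
      ‖V z₁ - V z₂‖ ^ 2 ≤ c₂ * inner ℝ (A z₁ - A z₂) (z₁ - z₂) := by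
  -- constants facts
  have hθ0 : 0 < min δ 1 := lt_min hδ one_pos
  have h1θ : 0 < 1 / min δ 1 := by positivity
  have hm1 : (1:ℝ) ≤ max g₀ 1 := le_max_right _ _
  have hpow1 : (1:ℝ) ≤ (2:ℝ) ^ (max g₀ 1 - 1) := Real.one_le_rpow (by norm_num) (by linarith)
  have hc2two : 2 ≤ myc2 δ g₀ := by unfold myc2; nlinarith
  have hc2pos : 0 < myc2 δ g₀ := by linarith
  -- monotonicity facts
  have hkey1 : ∀ s, 0 < s → 0 ≤ s * g' s - δ * g s := by
    intro s hs
    have h := (hlieb s hs).1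
    have hg := hgpos s hs
    rw [le_div_iff₀ hg] at h
    linarith
  have hkey2 : ∀ s, 0 < s → s * g' s - g₀ * g s ≤ 0 := by
    intro s hs
    have h := (hlieb s hs).2
    have hg := hgpos s hs
    rw [div_le_iff₀ hg] at h
    linarith
  have hmono0 : ∀ {a b : ℝ}, 0 < b → b ≤ a → g b ≤ g a := by
    intro a b hb hba
    have h := my_mono_rpow g g' 0 hgderiv
      (fun s hs => by have h1 := hkey1 s hs; have hg := hgpos s hs; nlinarith) hb hba
    simpa using h
  have hmδ : ∀ {a b : ℝ}, 0 < b → b ≤ a → g b * a ^ δ ≤ g a * b ^ δ := by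
    intro a b hb hba
    have ha : 0 < a := lt_of_lt_of_le hb hba
    have h := my_mono_rpow g g' δ hgderiv hkey1 hb hba
    rw [Real.rpow_neg hb.le, Real.rpow_neg ha.le, ← div_eq_mul_inv, ← div_eq_mul_inv,
      div_le_div_iff₀ (Real.rpow_pos_of_pos hb δ) (Real.rpow_pos_of_pos ha δ)] at h
    exact h
  have hmg₀ : ∀ {a b : ℝ}, 0 < b → b ≤ a → g a * b ^ g₀ ≤ g b * a ^ g₀ := by
    intro a b hb hba
    have ha : 0 < a := lt_of_lt_of_le hb hba
    have h := my_anti_rpow g g' g₀ hgderiv hkey2 hb hba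
    rw [Real.rpow_neg hb.le, Real.rpow_neg ha.le, ← div_eq_mul_inv, ← div_eq_mul_inv,
      div_le_div_iff₀ (Real.rpow_pos_of_pos ha g₀) (Real.rpow_pos_of_pos hb g₀)] at h
    exact h
  refine ⟨1/4, by norm_num, myc2 δ g₀, hc2pos, ?_⟩
  intro z₁ z₂
  by_cases h1 : z₁ = 0
  · by_cases h2 : z₂ = 0
    · subst h1; subst h2
      constructor <;> simp [hA0, hV0]
    · subst h1
      rw [hA0, hV0, zero_sub, zero_sub, zero_sub, inner_neg_neg, norm_neg]
      have hb : (0:ℝ) < ‖z₂‖ := norm_pos_iff.mpr h2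
      have hgb := hgpos _ hb
      have hT : (inner ℝ (A z₂) z₂ : ℝ) = (g ‖z₂‖ / ‖z₂‖) * ‖z₂‖ ^ 2 := by
        rw [hA z₂ h2, real_inner_smul_left, real_inner_self_eq_norm_sq]
      have hT2 : ‖V z₂‖ ^ 2 = (g ‖z₂‖ / ‖z₂‖) * ‖z₂‖ ^ 2 := by
        rw [hV z₂ h2, norm_smul, Real.norm_eq_abs, abs_of_nonneg (Real.sqrt_nonneg _),
          mul_pow, Real.sq_sqrt (by positivity)]
      have hTpos : 0 ≤ (g ‖z₂‖ / ‖z₂‖) * ‖z₂‖ ^ 2 := by positivity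
      rw [hT, hT2]
      constructor
      · linarith
      · nlinarith
  · by_cases h2 : z₂ = 0
    · subst h2
      rw [hA0, hV0, sub_zero, sub_zero, sub_zero]
      have ha : (0:ℝ) < ‖z₁‖ := norm_pos_iff.mpr h1
      have hga := hgpos _ ha
      have hT : (inner ℝ (A z₁) z₁ : ℝ) = (g ‖z₁‖ / ‖z₁‖) * ‖z₁‖ ^ 2 := by
        rw [hA z₁ h1, real_inner_smul_left, real_inner_self_eq_norm_sq]
      have hT2 : ‖V z₁‖ ^ 2 = (g ‖z₁‖ / ‖z₁‖) * ‖z₁‖ ^ 2 := by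
        rw [hV z₁ h1, norm_smul, Real.norm_eq_abs, abs_of_nonneg (Real.sqrt_nonneg _),
          mul_pow, Real.sq_sqrt (by positivity)]
      have hTpos : 0 ≤ (g ‖z₁‖ / ‖z₁‖) * ‖z₁‖ ^ 2 := by positivity
      rw [hT, hT2]
      constructor
      · linarith
      · nlinarith
    · -- main case
      have ha : (0:ℝ) < ‖z₁‖ := norm_pos_iff.mpr h1
      have hb : (0:ℝ) < ‖z₂‖ := norm_pos_iff.mpr h2
      have hga := hgpos _ ha
      have hgb := hgpos _ hb
      set p := Real.sqrt (g ‖z₁‖ / ‖z₁‖) with hpdef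
      set q := Real.sqrt (g ‖z₂‖ / ‖z₂‖) with hqdef
      have hp0 : 0 < p := Real.sqrt_pos.mpr (by positivity)
      have hq0 : 0 < q := Real.sqrt_pos.mpr (by positivity)
      have hp2 : p ^ 2 = g ‖z₁‖ / ‖z₁‖ := Real.sq_sqrt (by positivity)
      have hq2 : q ^ 2 = g ‖z₂‖ / ‖z₂‖ := Real.sq_sqrt (by positivity)
      have hga2 : p ^ 2 * ‖z₁‖ = g ‖z₁‖ := by rw [hp2]; field_simp
      have hgb2 : q ^ 2 * ‖z₂‖ = g ‖z₂‖ := by rw [hq2]; field_simp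
      set s : ℝ := inner ℝ z₁ z₂ with hsdef
      have habs := abs_real_inner_le_norm z₁ z₂
      rw [abs_le] at habs
      have hs1 : -(‖z₁‖ * ‖z₂‖) ≤ s := habs.1
      have hs2 : s ≤ ‖z₁‖ * ‖z₂‖ := habs.2
      have hcomm : (inner ℝ z₂ z₁ : ℝ) = s := by rw [hsdef]; exact real_inner_comm z₁ z₂
      have hcomm' : (inner ℝ z₁ z₂ : ℝ) = s := hsdef.symm
      have hDeq : (inner ℝ (A z₁ - A z₂) (z₁ - z₂) : ℝ)
          = p ^ 2 * ‖z₁‖ ^ 2 + q ^ 2 * ‖z₂‖ ^ 2 - (p ^ 2 + q ^ 2) * s := by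
        rw [hA z₁ h1, hA z₂ h2, ← hp2, ← hq2]
        rw [inner_sub_left, inner_sub_right, inner_sub_right, real_inner_smul_left,
          real_inner_smul_left, real_inner_smul_left, real_inner_smul_left,
          real_inner_self_eq_norm_sq, real_inner_self_eq_norm_sq, hcomm, hcomm']
        ring
      have hEeq : ‖V z₁ - V z₂‖ ^ 2
          = p ^ 2 * ‖z₁‖ ^ 2 + q ^ 2 * ‖z₂‖ ^ 2 - 2 * (p * q) * s := by
        rw [hV z₁ h1, hV z₂ h2, ← hpdef, ← hqdef, norm_sub_sq_real, norm_smul, norm_smul,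
          real_inner_smul_left, real_inner_smul_right, Real.norm_eq_abs, Real.norm_eq_abs,
          abs_of_nonneg (Real.sqrt_nonneg _), abs_of_nonneg (Real.sqrt_nonneg _), ← hpdef, ← hqdef,
          hcomm']
        ring
      clear_value p q s
      rw [hDeq, hEeq]
      rcases le_total ‖z₂‖ ‖z₁‖ with hba | hba
      · have hgm : q ^ 2 * ‖z₂‖ ≤ p ^ 2 * ‖z₁‖ := by
          rw [hga2, hgb2]; exact hmono0 hb hba
        have hlow : q ^ 2 * ‖z₂‖ * ‖z₁‖ ^ δ ≤ p ^ 2 * ‖z₁‖ * ‖z₂‖ ^ δ := by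
          rw [hga2, hgb2]; exact hmδ hb hba
        have hhigh : p ^ 2 * ‖z₁‖ * ‖z₂‖ ^ g₀ ≤ q ^ 2 * ‖z₂‖ * ‖z₁‖ ^ g₀ := by
          rw [hga2, hgb2]; exact hmg₀ hb hba
        exact my_scalar δ g₀ p q ‖z₁‖ ‖z₂‖ s hδ hδg₀ hp0 hq0 ha hb hba hgm hlow hhigh hs1 hs2
      · have hgm : p ^ 2 * ‖z₁‖ ≤ q ^ 2 * ‖z₂‖ := by
          rw [hga2, hgb2]; exact hmono0 ha hba
        have hlow : p ^ 2 * ‖z₁‖ * ‖z₂‖ ^ δ ≤ q ^ 2 * ‖z₂‖ * ‖z₁‖ ^ δ := by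
          rw [hga2, hgb2]; exact hmδ ha hba
        have hhigh : q ^ 2 * ‖z₂‖ * ‖z₁‖ ^ g₀ ≤ p ^ 2 * ‖z₁‖ * ‖z₂‖ ^ g₀ := by
          rw [hga2, hgb2]; exact hmg₀ ha hba
        have hs1' : -(‖z₂‖ * ‖z₁‖) ≤ s := by rw [mul_comm]; exact hs1
        have hs2' : s ≤ ‖z₂‖ * ‖z₁‖ := by rw [mul_comm]; exact hs2
        obtain ⟨hL, hU⟩ := my_scalar δ g₀ q p ‖z₂‖ ‖z₁‖ s hδ hδg₀ hq0 hp0 hb ha hba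
          hgm hlow hhigh hs1' hs2'
        constructor
        · nlinarith [hL]
        · nlinarith [hU]
end
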